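/- Let 𝒲 be a set of walls in ℝ^r and let σ, σ' be two chambers of 𝒲. Then there exist β ∈ σ and γ ∈ σ' such that every point of the closed line segment from β to γ lies on at most one wall of 𝒲. -/

import Mathlib

open Set

/-- The pairing `L(α) = ∑ i, L i * α i` of a rational covector with a real point. -/
def linPair {r : ℕ} (L : Fin r → ℚ) (α : Fin r → ℝ) : ℝ := ∑ i, (L i : ℝ) * α i

/-- A wall in `ℝ^r`: an affine hyperplane of the form `L⁻¹(β)` for a nonzero
`L ∈ ℚ_{≥0}^r` and `β ∈ ℝ`. -/
def IsWall {r : ℕ} (Hy : Set (Fin r → ℝ)) : Prop :=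
  ∃ (L : Fin r → ℚ) (β : ℝ), (∀ i, 0 ≤ L i) ∧ L ≠ 0 ∧ Hy = {α | linPair L α = β}

/-- A set of walls in `ℝ^r`: a set of walls which is finite modulo translation by `ℤ^r`. -/
def IsWallSet {r : ℕ} (W : Set (Set (Fin r → ℝ))) : Prop :=
  (∀ Hy ∈ W, IsWall Hy) ∧
  ∃ W₀ ⊆ W, W₀.Finite ∧ ∀ Hy ∈ W, ∃ (m : Fin r → ℤ), ∃ H₀ ∈ W₀,
    Hy = (fun α => α + fun i => (m i : ℝ)) '' H₀

/-- A chamber of a set of walls `W`: a nonempty set obtained by choosing, for each wall,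
either the strict upper side or the weak lower side, for some partition `W = Wp ⊔ Wm`. -/
def IsChamber {r : ℕ} (W : Set (Set (Fin r → ℝ))) (σ : Set (Fin r → ℝ)) : Prop :=
  σ.Nonempty ∧
  ∃ Wp Wm : Set (Set (Fin r → ℝ)), Wp ∪ Wm = W ∧ Wp ∩ Wm = ∅ ∧
    σ = {α | (∀ Hy ∈ Wp, ∀ (L : Fin r → ℚ) (β : ℝ),
                (∀ i, 0 ≤ L i) → L ≠ 0 → Hy = {x | linPair L x = β} → β < linPair L α) ∧
             (∀ Hy ∈ Wm, ∀ (L : Fin r → ℚ) (β : ℝ),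
                (∀ i, 0 ≤ L i) → L ≠ 0 → Hy = {x | linPair L x = β} → linPair L α ≤ β)}

/-- A wall `L⁻¹(γ)` separates `α` and `β` if `L(α) ≤ γ < L(β)` or `L(β) ≤ γ < L(α)`. -/
def WallSeparates {r : ℕ} (Hy : Set (Fin r → ℝ)) (α β : Fin r → ℝ) : Prop :=
  ∃ (L : Fin r → ℚ) (γ : ℝ), (∀ i, 0 ≤ L i) ∧ L ≠ 0 ∧ Hy = {x | linPair L x = γ} ∧
    ((linPair L α ≤ γ ∧ γ < linPair L β) ∨ (linPair L β ≤ γ ∧ γ < linPair L α))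

lemma linPair_add {r : ℕ} (L : Fin r → ℚ) (x y : Fin r → ℝ) :
    linPair L (x + y) = linPair L x + linPair L y := by
  simp [linPair, mul_add, Finset.sum_add_distrib]

lemma linPair_sub {r : ℕ} (L : Fin r → ℚ) (x y : Fin r → ℝ) :
    linPair L (x - y) = linPair L x - linPair L y := by
  simp [linPair, mul_sub, Finset.sum_sub_distrib]

lemma linPair_smul {r : ℕ} (L : Fin r → ℚ) (c : ℝ) (x : Fin r → ℝ) :
    linPair L (c • x) = c * linPair L x := by
  simp only [linPair, Finset.mul_sum, Pi.smul_apply, smul_eq_mul]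
  exact Finset.sum_congr rfl fun j _ => by ring

lemma linPair_est {r : ℕ} (L : Fin r → ℚ) (hL : ∀ i, 0 ≤ L i) (x y : Fin r → ℝ) :
    |linPair L x - linPair L y| ≤ (∑ i, (L i : ℝ)) * ‖x - y‖ := by
  rw [← linPair_sub, linPair, Finset.sum_mul]
  refine (Finset.abs_sum_le_sum_abs _ _).trans (Finset.sum_le_sum fun i _ => ?_)
  rw [abs_mul]
  have h1 : |((L i : ℝ))| = (L i : ℝ) := abs_of_nonneg (by exact_mod_cast hL i)
  rw [h1]
  refine mul_le_mul_of_nonneg_left ?_ (by exact_mod_cast hL i)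
  calc |(x - y) i| = ‖(x - y) i‖ := rfl
    _ ≤ ‖x - y‖ := norm_le_pi_norm _ i

/-- the image of a wall under translation by `m` -/
lemma image_shift {r : ℕ} (L : Fin r → ℚ) (β : ℝ) (m : Fin r → ℤ) :
    (fun α => α + fun i => ((m i : ℝ))) '' {x : Fin r → ℝ | linPair L x = β}
      = {x | linPair L x = β + linPair L (fun i => ((m i : ℝ)))} := by
  ext x
  simp only [Set.mem_image, Set.mem_setOf_eq]
  constructor
  · rintro ⟨y, hy, rfl⟩
    rw [linPair_add, hy]
  · intro hx
    refine ⟨x - fun i => ((m i : ℝ)), ?_, by abel⟩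
    rw [linPair_sub, hx]; ring

/-- common denominator clearing -/
lemma q_clear {r : ℕ} (L : Fin r → ℚ) (m : Fin r → ℤ) :
    ∃ k : ℤ, ((∏ i, (L i).den : ℕ) : ℝ) * linPair L (fun i => ((m i : ℝ))) = k := by
  set q : ℕ := ∏ i, (L i).den with hq
  have hcoord : ∀ i, ∃ k : ℤ, (q : ℚ) * L i = k := by
    intro i
    obtain ⟨c, hc⟩ := Finset.dvd_prod_of_mem (fun j => (L j).den) (Finset.mem_univ i)
    refine ⟨(c : ℤ) * (L i).num, ?_⟩
    rw [← hq] at hc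
    have hden : ((L i).den : ℚ) ≠ 0 := by exact_mod_cast (L i).den_nz
    have hnum := Rat.num_div_den (L i)
    rw [div_eq_iff hden] at hnum
    have hdm : ((L i).den : ℚ) * L i = (L i).num := by rw [hnum]; ring
    push_cast [hc]
    rw [mul_comm ((L i).den : ℚ) (c:ℚ), mul_assoc, hdm]
  choose kk hkk using hcoord
  refine ⟨∑ i, kk i * m i, ?_⟩
  have hQ : (q : ℚ) * (∑ i, L i * (m i : ℚ)) = ((∑ i, kk i * m i : ℤ) : ℚ) := by
    rw [Finset.mul_sum]
    push_cast
    exact Finset.sum_congr rfl fun i _ => by rw [← mul_assoc, hkk i]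
  have hlp : linPair L (fun i => ((m i : ℝ))) = ((∑ i, L i * (m i : ℚ) : ℚ) : ℝ) := by
    rw [linPair]; push_cast; rfl
  rw [hlp]
  exact_mod_cast congrArg (fun x : ℚ => (x : ℝ)) hQ

lemma linPair_single {r : ℕ} (L : Fin r → ℚ) (i : Fin r) (a : ℝ) :
    linPair L (Pi.single i a) = (L i : ℝ) * a := by
  rw [linPair, Finset.sum_eq_single i]
  · simp
  · intro b _ hb; simp [Pi.single_eq_of_ne hb]
  · simp

/-- Uniqueness of wall representations up to a positive real scalar. -/
lemma rep_unique {r : ℕ} {L L' : Fin r → ℚ} {β β' : ℝ}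
    (hL : ∀ i, 0 ≤ L i) (hL0 : L ≠ 0) (hL' : ∀ i, 0 ≤ L' i) (hL'0 : L' ≠ 0)
    (h : {x : Fin r → ℝ | linPair L x = β} = {x | linPair L' x = β'}) :
    ∃ c : ℝ, 0 < c ∧ (∀ x, linPair L' x = c * linPair L x) ∧ β' = c * β := by
  obtain ⟨i, hi⟩ : ∃ i, L i ≠ 0 := by
    by_contra hc; push_neg at hc; exact hL0 (funext hc)
  have hLi : (0:ℝ) < (L i : ℝ) := by
    have := lt_of_le_of_ne (hL i) (Ne.symm hi); exact_mod_cast this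
  set x₀ : Fin r → ℝ := Pi.single i (β / (L i : ℝ)) with hx₀
  have hx₀H : linPair L x₀ = β := by
    rw [hx₀, linPair_single]; field_simp
  have hx₀H' : linPair L' x₀ = β' := by
    have : x₀ ∈ {x : Fin r → ℝ | linPair L x = β} := hx₀H
    rw [h] at this; exact this
  have hker : ∀ v, linPair L v = 0 → linPair L' v = 0 := by
    intro v hv
    have h1 : linPair L (x₀ + v) = β := by rw [linPair_add, hx₀H, hv, add_zero]
    have h2 : (x₀ + v) ∈ {x : Fin r → ℝ | linPair L x = β} := h1
    rw [h] at h2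
    have h3 : linPair L' (x₀ + v) = β' := h2
    rw [linPair_add, hx₀H'] at h3
    linarith
  set c : ℝ := (L' i : ℝ) / (L i : ℝ) with hc
  have key : ∀ v, linPair L' v = c * linPair L v := by
    intro v
    have hw : linPair L (v - (linPair L v / (L i : ℝ)) • (Pi.single i 1 : Fin r → ℝ)) = 0 := by
      rw [linPair_sub, linPair_smul, linPair_single]
      field_simp
      ring
    have := hker _ hw
    rw [linPair_sub, linPair_smul, linPair_single] at this
    have h4 : linPair L' v = linPair L v / (L i : ℝ) * ((L' i : ℝ) * 1) := by linarith
    rw [h4, hc]; ring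
  have hL'i : (L' i : ℝ) ≠ 0 := by
    intro h0
    apply hL'0; funext j
    have hcz : c = 0 := by rw [hc, h0, zero_div]
    have hj := key (Pi.single j 1)
    rw [linPair_single, linPair_single, hcz, zero_mul] at hj
    have : (L' j : ℝ) = 0 := by linarith
    have : L' j = 0 := by exact_mod_cast this
    simpa using this
  have hcpos : 0 < c := by
    rw [hc]
    apply div_pos _ hLi
    exact lt_of_le_of_ne (by exact_mod_cast hL' i) (Ne.symm hL'i)
  refine ⟨c, hcpos, key, ?_⟩
  rw [← hx₀H', key, hx₀H]

lemma chamber_ball {r : ℕ} {W : Set (Set (Fin r → ℝ))} (hW : IsWallSet W)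
    {σ : Set (Fin r → ℝ)} (hσ : IsChamber W σ) (hWne : W.Nonempty) :
    ∃ c t, 0 < t ∧ Metric.ball c t ⊆ σ ∧ ∀ H ∈ W, c ∉ H := by
  obtain ⟨⟨α, hα⟩, Wp, Wm, hunion, hdisj, hσeq⟩ := hσ
  obtain ⟨hwall, W₀, hW₀W, hW₀fin, htrans⟩ := hW
  have hwall' : ∀ H₀ : Set (Fin r → ℝ), ∃ (L : Fin r → ℚ) (β : ℝ),
      H₀ ∈ W₀ → ((∀ i, 0 ≤ L i) ∧ L ≠ 0 ∧ H₀ = {x | linPair L x = β}) := by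
    intro H₀
    by_cases h : H₀ ∈ W₀
    · obtain ⟨L, β, h1, h2, h3⟩ := hwall H₀ (hW₀W h)
      exact ⟨L, β, fun _ => ⟨h1, h2, h3⟩⟩
    · exact ⟨0, 0, fun hh => absurd hh h⟩
  choose L₀ β₀ hdata using hwall'
  have htrans' : ∀ Hy : Set (Fin r → ℝ), ∃ (m : Fin r → ℤ) (H₀ : Set (Fin r → ℝ)),
      Hy ∈ W → (H₀ ∈ W₀ ∧ Hy = (fun α => α + fun i => ((m i : ℝ))) '' H₀) := by
    intro Hy
    by_cases h : Hy ∈ W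
    · obtain ⟨m, H₀, h1, h2⟩ := htrans Hy h
      exact ⟨m, H₀, fun _ => ⟨h1, h2⟩⟩
    · exact ⟨0, ∅, fun hh => absurd hh h⟩
  choose mH baseH hbase using htrans'
  set mr : (Fin r → ℤ) → (Fin r → ℝ) := fun m i => ((m i : ℝ)) with hmr
  set bb : Set (Fin r → ℝ) → ℝ :=
    fun H => β₀ (baseH H) + linPair (L₀ (baseH H)) (mr (mH H)) with hbbdef
  have hcanon : ∀ H ∈ W, H = {x | linPair (L₀ (baseH H)) x = bb H} := by
    intro H hH
    obtain ⟨hb, hsh⟩ := hbase H hH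
    obtain ⟨_, _, hrep⟩ := hdata (baseH H) hb
    calc H = (fun α => α + fun i => ((mH H i : ℝ))) '' (baseH H) := hsh
      _ = (fun α => α + fun i => ((mH H i : ℝ)))
            '' {x | linPair (L₀ (baseH H)) x = β₀ (baseH H)} := by rw [← hrep]
      _ = {x | linPair (L₀ (baseH H)) x
            = β₀ (baseH H) + linPair (L₀ (baseH H)) (mr (mH H))} := image_shift _ _ _
  set q : Set (Fin r → ℝ) → ℕ := fun H₀ => ∏ i, (L₀ H₀ i).den with hqdef
  have hqpos : ∀ H₀, 0 < q H₀ :=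
    fun H₀ => Finset.prod_pos fun i _ => (L₀ H₀ i).den_pos
  set ones : Fin r → ℝ := fun _ => 1 with hones
  set s : Set (Fin r → ℝ) → ℝ := fun H₀ => linPair (L₀ H₀) ones with hsdef
  set y : Set (Fin r → ℝ) → ℝ :=
    fun H₀ => (q H₀ : ℝ) * (linPair (L₀ H₀) α - β₀ H₀) with hydef
  set e : Set (Fin r → ℝ) → ℝ := fun H₀ => (y H₀ - ⌈y H₀⌉ + 1) / (q H₀) with hedef
  have hepos : ∀ H₀, 0 < e H₀ := by
    intro H₀
    apply div_pos _ (by exact_mod_cast hqpos H₀)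
    have := Int.ceil_lt_add_one (y H₀)
    linarith
  have hspos : ∀ H₀ ∈ W₀, 0 < s H₀ := by
    intro H₀ h
    obtain ⟨h1, h2, _⟩ := hdata H₀ h
    obtain ⟨i, hi⟩ : ∃ i, L₀ H₀ i ≠ 0 := by
      by_contra hcon; push_neg at hcon; exact h2 (funext hcon)
    have hpos : (0:ℚ) < L₀ H₀ i := lt_of_le_of_ne (h1 i) (Ne.symm hi)
    show (0:ℝ) < linPair (L₀ H₀) ones
    rw [linPair]
    simp only [hones, mul_one]
    apply Finset.sum_pos' (fun j _ => by exact_mod_cast h1 j)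
    exact ⟨i, Finset.mem_univ i, by exact_mod_cast hpos⟩
  set F : Finset (Set (Fin r → ℝ)) := hW₀fin.toFinset with hF
  have hmemF : ∀ H₀, H₀ ∈ W₀ ↔ H₀ ∈ F := by
    intro H₀; rw [hF, Set.Finite.mem_toFinset]
  have hFne : F.Nonempty := by
    obtain ⟨H, hH⟩ := hWne
    exact ⟨baseH H, (hmemF _).mp (hbase H hH).1⟩
  set εm : ℝ := F.inf' hFne e with hεm
  have hεmpos : 0 < εm := (Finset.lt_inf'_iff hFne).mpr fun b _ => hepos b
  set smax : ℝ := F.sup' hFne s with hsmax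
  have hsmaxpos : 0 < smax := by
    obtain ⟨H, hH⟩ := hWne
    have hb := (hbase H hH).1
    exact lt_of_lt_of_le (hspos _ hb) (Finset.le_sup' s ((hmemF _).mp hb))
  set t : ℝ := εm / (4 * smax) with htdef
  have htpos : 0 < t := div_pos hεmpos (by linarith)
  set c : Fin r → ℝ := α - t • ones with hcdef
  -- basic per-wall facts
  have hmem := hα
  rw [hσeq] at hmem
  have hWpW : ∀ H ∈ Wp, H ∈ W := fun H h => hunion ▸ Set.mem_union_left Wm h
  have hWmW : ∀ H ∈ Wm, H ∈ W := fun H h => hunion ▸ Set.mem_union_right Wp h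
  have hcL : ∀ H, linPair (L₀ (baseH H)) c
      = linPair (L₀ (baseH H)) α - t * s (baseH H) := by
    intro H
    rw [hcdef, linPair_sub, linPair_smul]
  have hball_est : ∀ x ∈ Metric.ball c t, ∀ H ∈ W,
      |linPair (L₀ (baseH H)) x - linPair (L₀ (baseH H)) c| ≤ s (baseH H) * t := by
    intro x hx H hHW
    have h1 := linPair_est (L₀ (baseH H)) (hdata _ (hbase H hHW).1).1 x c
    have hs' : (∑ i, ((L₀ (baseH H)) i : ℝ)) = s (baseH H) := by
      show _ = linPair (L₀ (baseH H)) ones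
      rw [linPair]; simp [hones]
    rw [hs'] at h1
    refine h1.trans ?_
    apply mul_le_mul_of_nonneg_left _ (hspos _ (hbase H hHW).1).le
    rw [Metric.mem_ball, dist_eq_norm] at hx
    exact hx.le
  have hsle : ∀ H ∈ W, s (baseH H) ≤ smax :=
    fun H hH => Finset.le_sup' s ((hmemF _).mp (hbase H hH).1)
  -- gap estimate for Wp walls
  have hgap : ∀ H ∈ Wp, e (baseH H) ≤ linPair (L₀ (baseH H)) α - bb H := by
    intro H hHp
    have hHW : H ∈ W := hWpW H hHp
    obtain ⟨h1, h2, _⟩ := hdata (baseH H) (hbase H hHW).1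
    have hlt : bb H < linPair (L₀ (baseH H)) α :=
      hmem.1 H hHp (L₀ (baseH H)) (bb H) h1 h2 (hcanon H hHW)
    obtain ⟨k, hk⟩ := q_clear (L₀ (baseH H)) (mH H)
    have hQpos : (0:ℝ) < (q (baseH H) : ℝ) := by exact_mod_cast hqpos _
    have h3 : y (baseH H) - k
        = (q (baseH H) : ℝ) * (linPair (L₀ (baseH H)) α - bb H) := by
      rw [hydef]
      show (q (baseH H) : ℝ) * (linPair (L₀ (baseH H)) α - β₀ (baseH H)) - (k:ℝ) = _
      rw [← hk, hbbdef]
      show _ = (q (baseH H) : ℝ) * (linPair (L₀ (baseH H)) α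
        - (β₀ (baseH H) + linPair (L₀ (baseH H)) (mr (mH H))))
      ring
    have hky : (k : ℝ) < y (baseH H) := by nlinarith
    have hkc : (k : ℝ) ≤ (⌈y (baseH H)⌉ : ℝ) - 1 := by
      have : k < ⌈y (baseH H)⌉ := Int.lt_ceil.mpr hky
      have : k ≤ ⌈y (baseH H)⌉ - 1 := by omega
      exact_mod_cast this
    have h4 : e (baseH H) ≤ (y (baseH H) - (k:ℝ)) / (q (baseH H) : ℝ) := by
      have hnum : y (baseH H) - (⌈y (baseH H)⌉:ℝ) + 1 ≤ y (baseH H) - (k:ℝ) := by linarith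
      calc e (baseH H) = (y (baseH H) - ⌈y (baseH H)⌉ + 1) / ((q (baseH H) : ℕ) : ℝ) := rfl
        _ ≤ _ := (div_le_div_iff_of_pos_right hQpos).mpr hnum
    rw [h3] at h4
    calc e (baseH H) ≤ (q (baseH H) : ℝ) * (linPair (L₀ (baseH H)) α - bb H)
        / (q (baseH H) : ℝ) := h4
      _ = linPair (L₀ (baseH H)) α - bb H := by field_simp
  -- the ball is inside σ
  have hballσ : Metric.ball c t ⊆ σ := by
    intro x hx
    rw [hσeq]
    constructor
    · intro H hHp L' β' h1' h2' hrep'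
      have hHW : H ∈ W := hWpW H hHp
      obtain ⟨h1, h2, _⟩ := hdata (baseH H) (hbase H hHW).1
      have hcrep := hcanon H hHW
      obtain ⟨cc, hccpos, hml, hbb'⟩ := rep_unique h1 h2 h1' h2' (hcrep ▸ hrep')
      have hblt : bb H < linPair (L₀ (baseH H)) x := by
        have est := (abs_le.mp (hball_est x hx H hHW)).1
        have hgapH := hgap H hHp
        have hele : εm ≤ e (baseH H) :=
          Finset.inf'_le e ((hmemF _).mp (hbase H hHW).1)
        have hst : s (baseH H) * t ≤ smax * t :=
          mul_le_mul_of_nonneg_right (hsle H hHW) htpos.le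
        have h2smax : 2 * (smax * t) = εm / 2 := by
          rw [htdef]; field_simp; ring
        have hc1 := hcL H
        linarith
      calc β' = cc * bb H := hbb'
        _ < cc * linPair (L₀ (baseH H)) x := (mul_lt_mul_iff_right₀ hccpos).mpr hblt
        _ = linPair L' x := (hml x).symm
    · intro H hHm L' β' h1' h2' hrep'
      have hHW : H ∈ W := hWmW H hHm
      obtain ⟨h1, h2, _⟩ := hdata (baseH H) (hbase H hHW).1
      have hcrep := hcanon H hHW
      obtain ⟨cc, hccpos, hml, hbb'⟩ := rep_unique h1 h2 h1' h2' (hcrep ▸ hrep')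
      have hble : linPair (L₀ (baseH H)) x ≤ bb H := by
        have est := (abs_le.mp (hball_est x hx H hHW)).2
        have hle : linPair (L₀ (baseH H)) α ≤ bb H :=
          hmem.2 H hHm (L₀ (baseH H)) (bb H) h1 h2 (hcanon H hHW)
        have hc1 := hcL H
        linarith
      calc linPair L' x = cc * linPair (L₀ (baseH H)) x := hml x
        _ ≤ cc * bb H := by
            exact mul_le_mul_of_nonneg_left hble hccpos.le
        _ = β' := hbb'.symm
  -- the center avoids all walls
  refine ⟨c, t, htpos, hballσ, ?_⟩
  intro H hHW hcH
  rw [hcanon H hHW] at hcH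
  have hcH' : linPair (L₀ (baseH H)) c = bb H := hcH
  have hc1 := hcL H
  have hsposH := hspos _ (hbase H hHW).1
  rcases (hunion ▸ hHW : H ∈ Wp ∪ Wm) with hHp | hHm
  · have hgapH := hgap H hHp
    have hele : εm ≤ e (baseH H) :=
      Finset.inf'_le e ((hmemF _).mp (hbase H hHW).1)
    have hst : s (baseH H) * t ≤ smax * t :=
      mul_le_mul_of_nonneg_right (hsle H hHW) htpos.le
    have h2smax : 2 * (smax * t) = εm / 2 := by
      rw [htdef]; field_simp; ring
    linarith
  · obtain ⟨h1, h2, _⟩ := hdata (baseH H) (hbase H hHW).1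
    have hle : linPair (L₀ (baseH H)) α ≤ bb H :=
      hmem.2 H hHm (L₀ (baseH H)) (bb H) h1 h2 (hcanon H hHW)
    nlinarith

lemma wallset_countable {r : ℕ} {W : Set (Set (Fin r → ℝ))} (hW : IsWallSet W) :
    W.Countable := by
  obtain ⟨_, W₀, hsub, hfin, htrans⟩ := hW
  have hW' : W ⊆ ⋃ H₀ ∈ W₀,
      Set.range (fun m : Fin r → ℤ => (fun α => α + fun i => ((m i : ℝ))) '' H₀) := by
    intro H hH
    obtain ⟨m, H₀, hH₀, heq⟩ := htrans H hH
    exact Set.mem_biUnion hH₀ ⟨m, heq.symm⟩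
  exact Set.Countable.mono hW'
    (Set.Countable.biUnion hfin.countable fun H₀ _ => Set.countable_range _)

open MeasureTheory in
lemma measure_zero_hyp {r : ℕ} (v : Fin r → ℝ) (e : ℝ) (hv : v ≠ 0) :
    volume {γ : Fin r → ℝ | ∑ i, v i * γ i = e} = 0 := by
  obtain ⟨i, hi⟩ : ∃ i, v i ≠ 0 := by
    by_contra h; push_neg at h; exact hv (funext h)
  set Ψ : (Fin r → ℝ) →ₗ[ℝ] ℝ :=
    { toFun := fun γ => ∑ j, v j * γ j
      map_add' := by intro x y; simp [mul_add, Finset.sum_add_distrib]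
      map_smul' := by
        intro c x; simp [Finset.mul_sum]
        exact Finset.sum_congr rfl fun j _ => by ring } with hΨ
  set p : Fin r → ℝ := Pi.single i (e / v i) with hp
  have hΨp : Ψ p = e := by
    simp only [hΨ, LinearMap.coe_mk, AddHom.coe_mk, hp]
    rw [Finset.sum_eq_single i]
    · simp [Pi.single_eq_same]; field_simp
    · intro b _ hb; simp [Pi.single_eq_of_ne hb]
    · simp
  set s : AffineSubspace ℝ (Fin r → ℝ) := AffineSubspace.mk' p (LinearMap.ker Ψ) with hs
  have hcarrier : {γ : Fin r → ℝ | ∑ j, v j * γ j = e} = (s : Set (Fin r → ℝ)) := by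
    ext γ
    simp only [Set.mem_setOf_eq, hs, SetLike.mem_coe, AffineSubspace.mem_mk',
      LinearMap.mem_ker, vsub_eq_sub]
    constructor
    · intro h; show Ψ (γ - p) = 0
      rw [map_sub, hΨp]
      simp only [hΨ, LinearMap.coe_mk, AddHom.coe_mk]; rw [h]; ring
    · intro h; have h' : Ψ (γ - p) = 0 := h
      rw [map_sub, hΨp, sub_eq_zero] at h'
      simpa only [hΨ, LinearMap.coe_mk, AddHom.coe_mk] using h'
  have hne : s ≠ ⊤ := by
    intro htop
    have hmem : p + Pi.single i 1 ∈ s := htop ▸ AffineSubspace.mem_top ℝ _ _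
    rw [hs, AffineSubspace.mem_mk'] at hmem
    have h2 : Ψ (p + Pi.single i 1 -ᵥ p) = 0 := hmem
    rw [vsub_eq_sub, add_sub_cancel_left] at h2
    have h3 : Ψ (Pi.single i 1) = v i := by
      simp only [hΨ, LinearMap.coe_mk, AddHom.coe_mk]
      rw [Finset.sum_eq_single i]
      · simp
      · intro b _ hb; simp [Pi.single_eq_of_ne hb]
      · simp
    exact hi (h3 ▸ h2)
  rw [hcarrier]
  exact Measure.addHaar_affineSubspace volume s hne


open MeasureTheory

/-- Given two chambers `σ, σ''` of a set of walls `W`, there exist `β ∈ σ` and `γ ∈ σ''` such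
that every point of the closed segment from `β` to `γ` lies on at most one wall of `W`. -/
theorem exists_generic_segment_between_chambers {r : ℕ} (hr : 0 < r)
    (W : Set (Set (Fin r → ℝ))) (hW : IsWallSet W)
    (σ σ' : Set (Fin r → ℝ)) (hσ : IsChamber W σ) (hσ' : IsChamber W σ') :
    ∃ β ∈ σ, ∃ γ ∈ σ', ∀ u ∈ segment ℝ β γ, {Hy ∈ W | u ∈ Hy}.Subsingleton := by
  rcases Set.eq_empty_or_nonempty W with rfl | hWne
  · obtain ⟨β, hβ⟩ := hσ.1
    obtain ⟨γ, hγ⟩ := hσ'.1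
    refine ⟨β, hβ, γ, hγ, fun u _ => ?_⟩
    intro H1 hH1 H2 hH2
    exact absurd hH1.1 (Set.notMem_empty H1)
  obtain ⟨β, tβ, htβ, hballβ, hβnot⟩ := chamber_ball hW hσ hWne
  obtain ⟨cγ, tγ, htγ, hballγ, _⟩ := chamber_ball hW hσ' hWne
  have hβσ : β ∈ σ := hballβ (Metric.mem_ball_self htβ)
  set Z : Set (Fin r → ℝ) → Set (Fin r → ℝ) → Set (Fin r → ℝ) :=
    fun H H' => {γ | H ≠ H' ∧ ∃ u ∈ segment ℝ β γ, u ∈ H ∩ H'} with hZ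
  have hZ0 : ∀ H ∈ W, ∀ H' ∈ W, volume (Z H H') = 0 := by
    intro H hH H' hH'
    rcases Set.eq_empty_or_nonempty (Z H H') with hemp | ⟨γ₀, hγ₀⟩
    · rw [hemp]; exact measure_empty
    obtain ⟨hneq, u₀, hu₀seg, hu₀H, hu₀H'⟩ := hγ₀
    obtain ⟨L, cst, hLnn, hLne, hHrep⟩ := hW.1 H hH
    obtain ⟨L', dst, hL'nn, hL'ne, hH'rep⟩ := hW.1 H' hH'
    have hfβ : linPair L β ≠ cst := by
      intro h; exact hβnot H hH (by rw [hHrep]; exact h)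
    set a : ℝ := cst - linPair L β with hadef
    set b : ℝ := dst - linPair L' β with hbdef
    have ha : a ≠ 0 := sub_ne_zero.mpr (Ne.symm hfβ)
    set v : Fin r → ℝ := fun i => a * (L' i : ℝ) - b * (L i : ℝ)  with hvdef
    set E : ℝ := a * linPair L' β - b * linPair L β with hEdef
    have hvsum : ∀ x : Fin r → ℝ,
        ∑ i, v i * x i = a * linPair L' x - b * linPair L x := by
      intro x
      rw [linPair, linPair, Finset.mul_sum, Finset.mul_sum, ← Finset.sum_sub_distrib]
      exact Finset.sum_congr rfl fun i _ => by rw [hvdef]; ring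
    have hfu₀ : linPair L u₀ = cst := by rw [hHrep] at hu₀H; exact hu₀H
    have hgu₀ : linPair L' u₀ = dst := by rw [hH'rep] at hu₀H'; exact hu₀H'
    have hsub : Z H H' ⊆ {γ | ∑ i, v i * γ i = E} := by
      rintro γ ⟨hne', u, huseg, huH, huH'⟩
      obtain ⟨p, qq, hp, hq, hpq, hu⟩ := huseg
      have hfu : linPair L u = cst := by rw [hHrep] at huH; exact huH
      have hgu : linPair L' u = dst := by rw [hH'rep] at huH'; exact huH'
      have hfu' : linPair L u = p * linPair L β + qq * linPair L γ := by
        rw [← hu, linPair_add, linPair_smul, linPair_smul]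
      have hgu' : linPair L' u = p * linPair L' β + qq * linPair L' γ := by
        rw [← hu, linPair_add, linPair_smul, linPair_smul]
      have hp1 : p = 1 - qq := by linarith
      rw [hp1] at hfu' hgu'
      have hA : a = qq * (linPair L γ - linPair L β) := by
        rw [hadef, ← hfu, hfu']; ring
      have hB' : b = qq * (linPair L' γ - linPair L' β) := by
        rw [hbdef, ← hgu, hgu']; ring
      show ∑ i, v i * γ i = E
      rw [hvsum γ, hEdef]
      linear_combination (linPair L' γ - linPair L' β) * hA
        - (linPair L γ - linPair L β) * hB'
    have hvne : v ≠ 0 := by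
      intro hv0
      obtain ⟨j, hj⟩ : ∃ j, L' j ≠ 0 := by
        by_contra hcon; push_neg at hcon; exact hL'ne (funext hcon)
      have hvj : ∀ i, a * (L' i : ℝ) = b * (L i : ℝ) := by
        intro i
        have := congrFun hv0 i
        rw [hvdef] at this
        simpa [sub_eq_zero] using this
      have hL'j : ((L' j : ℝ)) ≠ 0 := by exact_mod_cast hj
      have hbne : b ≠ 0 := by
        intro h0
        have h1 := hvj j
        rw [h0, zero_mul] at h1
        exact (mul_ne_zero ha hL'j) h1
      have hfg : ∀ x : Fin r → ℝ, a * linPair L' x = b * linPair L x := by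
        intro x
        rw [linPair, linPair, Finset.mul_sum, Finset.mul_sum]
        exact Finset.sum_congr rfl fun i _ => by rw [← mul_assoc, ← mul_assoc, hvj i]
      have had : a * dst = b * cst := by
        have := hfg u₀; rwa [hfu₀, hgu₀] at this
      apply hneq
      rw [hHrep, hH'rep]
      ext x
      simp only [Set.mem_setOf_eq]
      constructor
      · intro hfx
        have h1 := hfg x
        rw [hfx] at h1
        have h2 : a * linPair L' x = a * dst := by rw [h1, ← had]
        exact mul_left_cancel₀ ha h2
      · intro hgx
        have h1 := hfg x
        rw [hgx] at h1
        have h2 : b * linPair L x = b * cst := by rw [← h1, ← had]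
        exact mul_left_cancel₀ hbne h2
    exact measure_mono_null hsub (measure_zero_hyp v E hvne)
  have hcnt : W.Countable := wallset_countable hW
  set B : Set (Fin r → ℝ) := ⋃ H ∈ W, ⋃ H' ∈ W, Z H H' with hBdef
  have hB0 : volume B = 0 := by
    rw [hBdef, measure_biUnion_null_iff hcnt]
    intro H hH
    rw [measure_biUnion_null_iff hcnt]
    intro H' hH'
    exact hZ0 H hH H' hH'
  have hpos : 0 < volume (Metric.ball cγ tγ) := Metric.measure_ball_pos volume cγ htγ
  have hns : ¬ Metric.ball cγ tγ ⊆ B := by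
    intro hsub
    have h0 : volume (Metric.ball cγ tγ) = 0 := measure_mono_null hsub hB0
    rw [h0] at hpos
    exact lt_irrefl _ hpos
  obtain ⟨γ, hγball, hγB⟩ := Set.not_subset.mp hns
  refine ⟨β, hβσ, γ, hballγ hγball, ?_⟩
  intro u hu H1 hH1 H2 hH2
  by_contra hne12
  apply hγB
  rw [hBdef]
  refine Set.mem_biUnion hH1.1 (Set.mem_biUnion hH2.1 ?_)
  exact ⟨hne12, u, hu, hH1.2, hH2.2⟩
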